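/- arXiv:1810.12577 — 2 statements merged into one kernel-verified Lean document; each statement's English description precedes it below -/
import Mathlib

section
/- With A(ψ) the (1|1)-dimensional module over the Neveu–Schwarz positive part SVir_{1/2}⁺ as above, A(ψ) is a simple module if and only if ψ is nontrivial (i.e., ψ(L_1) ≠ 0 or ψ(L_2) ≠ 0). -/
noncomputable section

/-- The action of `L_n` on `A(ψ) = ℂw ⊕ ℂu` (`w = (1,0)` even, `u = (0,1)` odd). -/
def aL (ψL : ℤ → ℂ) (n : ℤ) : Module.End ℂ (ℂ × ℂ) := ψL n • (LinearMap.id)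

/-- The action of `G_{k−1/2}` (`k ≥ 1`) on `A(ψ)`: `G_{1/2}·w = u`, `G_{1/2}·u = ψ(L_1)w`,
and for `k ≥ 2`: `G_{k−1/2}·w = 0`, `G_{k−1/2}·u = 2ψ(L_k)w`. -/
def aG (ψL : ℤ → ℂ) (k : ℤ) : Module.End ℂ (ℂ × ℂ) :=
  LinearMap.prod
    ((if k = 1 then ψL 1 else 2 * ψL k) • LinearMap.snd ℂ ℂ ℂ)
    ((if k = 1 then (1 : ℂ) else 0) • LinearMap.fst ℂ ℂ ℂ)

/-- The even part `ℂw` of `A(ψ)`. -/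
def evenPart : Submodule ℂ (ℂ × ℂ) := Submodule.prod ⊤ ⊥

/-- The odd part `ℂu` of `A(ψ)`. -/
def oddPart : Submodule ℂ (ℂ × ℂ) := Submodule.prod ⊥ ⊤

/-- With `A(ψ)` the `(1|1)`-dimensional module over the Neveu–Schwarz
positive part `SVir_{1/2}⁺` as above (`ψ : p_{1/2} → ℂ` a Lie superalgebra homomorphism),
`A(ψ)` is a simple module — i.e. it has no graded invariant subspace other than `0` and the
whole space — if and only if `ψ` is nontrivial, i.e. `ψ(L_1) ≠ 0` or `ψ(L_2) ≠ 0`. -/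
theorem whittaker_stmt7 (ψL ψG : ℤ → ℂ)
    (hLL : ∀ m n : ℤ, 1 ≤ m → 1 ≤ n → ((m : ℂ) - (n : ℂ)) * ψL (m + n) = 0)
    (hLG : ∀ m k : ℤ, 1 ≤ m → 2 ≤ k → ((m : ℂ)/2 - ((k : ℂ) - 1/2)) * ψG (m + k) = 0)
    (hGG : ∀ k l : ℤ, 2 ≤ k → 2 ≤ l → (2 : ℂ) * ψL (k + l - 1) = 0)
    (hparity : ∀ k : ℤ, 2 ≤ k → ψG k = 0) :
    (∀ W : Submodule ℂ (ℂ × ℂ),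
      (∀ n : ℤ, 1 ≤ n → ∀ v ∈ W, aL ψL n v ∈ W) →
      (∀ k : ℤ, 1 ≤ k → ∀ v ∈ W, aG ψL k v ∈ W) →
      W = (W ⊓ evenPart) ⊔ (W ⊓ oddPart) → W = ⊥ ∨ W = ⊤)
    ↔ (ψL 1 ≠ 0 ∨ ψL 2 ≠ 0) := by
  constructor
  · -- simplicity → nontrivial
    intro hsimple
    by_contra h
    push_neg at h
    obtain ⟨h1, h2⟩ := h
    have hk : ∀ k : ℤ, 2 ≤ k → ψL k = 0 := by
      intro k hk2
      rcases eq_or_lt_of_le hk2 with h | h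
      · rw [← h]; exact h2
      · have h3 := hGG 2 (k - 1) le_rfl (by omega)
        have e : (2 + (k - 1) - 1 : ℤ) = k := by ring
        rw [e] at h3
        rcases mul_eq_zero.mp h3 with h' | h'
        · norm_num at h'
        · exact h'
    have hinv := hsimple oddPart ?_ ?_ ?_
    · rcases hinv with hb | ht
      · have : ((0 : ℂ), (1 : ℂ)) ∈ oddPart := by
          simp [oddPart, Submodule.mem_prod]
        rw [hb, Submodule.mem_bot] at this
        simp [Prod.ext_iff] at this
      · have : ((1 : ℂ), (0 : ℂ)) ∈ oddPart := by rw [ht]; trivial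
        simp [oddPart, Submodule.mem_prod] at this
    · intro n hn v hv
      simp only [oddPart, Submodule.mem_prod, Submodule.mem_bot, Submodule.mem_top,
        and_true] at hv ⊢
      simp [aL, hv]
    · intro k hkk v hv
      simp only [oddPart, Submodule.mem_prod, Submodule.mem_bot, Submodule.mem_top,
        and_true] at hv ⊢
      rcases eq_or_lt_of_le hkk with h | h
      · simp [aG, ← h, h1]
      · have hk0 : ψL k = 0 := hk k (by omega)
        have : k ≠ 1 := by omega
        simp [aG, this, hk0]
    · -- grading of oddPart
      have hio : oddPart ⊓ oddPart = oddPart := inf_idem _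
      have hie : oddPart ⊓ evenPart = ⊥ := by
        apply le_antisymm
        · intro x hx
          simp only [Submodule.mem_inf, oddPart, evenPart, Submodule.mem_prod,
            Submodule.mem_bot, Submodule.mem_top, and_true, true_and] at hx
          simp only [Submodule.mem_bot, Prod.ext_iff]
          exact ⟨hx.1, hx.2⟩
        · exact bot_le
      rw [hie, hio, bot_sup_eq]
  · -- nontrivial → simplicity
    intro h W hLinv hGinv hgrad
    -- helper facts
    have hwu : ((1:ℂ),(0:ℂ)) ∈ W → ((0:ℂ),(1:ℂ)) ∈ W := by
      intro hw
      have := hGinv 1 le_rfl _ hw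
      simpa [aG] using this
    have htop : ((1:ℂ),(0:ℂ)) ∈ W → W = ⊤ := by
      intro hw
      have hu := hwu hw
      rw [eq_top_iff]
      intro v _
      have hv : v = v.1 • ((1:ℂ),(0:ℂ)) + v.2 • ((0:ℂ),(1:ℂ)) := by
        simp [Prod.ext_iff]
      rw [hv]
      exact W.add_mem (W.smul_mem _ hw) (W.smul_mem _ hu)
    -- if W contains a nonzero even element, then w ∈ W
    have heven : ∀ x ∈ W ⊓ evenPart, x ≠ 0 → ((1:ℂ),(0:ℂ)) ∈ W := by
      intro x hx hx0
      simp only [Submodule.mem_inf, evenPart, Submodule.mem_prod, Submodule.mem_bot,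
        Submodule.mem_top, true_and] at hx
      obtain ⟨hxW, hx2⟩ := hx
      have hx1 : x.1 ≠ 0 := by
        intro hc
        apply hx0
        exact Prod.ext hc hx2
      have := W.smul_mem (x.1)⁻¹ hxW
      have hxe : (x.1)⁻¹ • x = ((1:ℂ),(0:ℂ)) := by
        simp [Prod.ext_iff, Prod.smul_def, hx2, inv_mul_cancel₀ hx1]
      rwa [hxe] at this
    by_cases hbot : W = ⊥
    · exact Or.inl hbot
    right
    -- one of the graded pieces is nonzero
    have hne : W ⊓ evenPart ≠ ⊥ ∨ W ⊓ oddPart ≠ ⊥ := by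
      by_contra hc
      push_neg at hc
      rw [hc.1, hc.2, sup_idem] at hgrad
      exact hbot hgrad
    rcases hne with hE | hO
    · obtain ⟨x, hx, hx0⟩ := Submodule.exists_mem_ne_zero_of_ne_bot hE
      exact htop (heven x hx hx0)
    · obtain ⟨x, hx, hx0⟩ := Submodule.exists_mem_ne_zero_of_ne_bot hO
      simp only [Submodule.mem_inf, oddPart, Submodule.mem_prod, Submodule.mem_bot,
        Submodule.mem_top, and_true] at hx
      obtain ⟨hxW, hx1⟩ := hx
      have hx2 : x.2 ≠ 0 := by
        intro hc
        exact hx0 (Prod.ext hx1 hc)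
      have huW : ((0:ℂ),(1:ℂ)) ∈ W := by
        have := W.smul_mem (x.2)⁻¹ hxW
        have hxe : (x.2)⁻¹ • x = ((0:ℂ),(1:ℂ)) := by
          simp [Prod.ext_iff, Prod.smul_def, hx1, inv_mul_cancel₀ hx2]
        rwa [hxe] at this
      rcases h with h1 | h2
      · have := hGinv 1 le_rfl _ huW
        have he : aG ψL 1 ((0:ℂ),(1:ℂ)) = (ψL 1, 0) := by simp [aG]
        rw [he] at this
        apply htop
        apply heven (ψL 1, 0) ⟨this, by simp [evenPart, Submodule.mem_prod]⟩
        simp [Prod.ext_iff, h1]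
      · have := hGinv 2 (by norm_num) _ huW
        have he : aG ψL 2 ((0:ℂ),(1:ℂ)) = (2 * ψL 2, 0) := by norm_num [aG]
        rw [he] at this
        apply htop
        apply heven (2 * ψL 2, 0) ⟨this, by simp [evenPart, Submodule.mem_prod]⟩
        simp [Prod.ext_iff, h2]
end
end

section
/- Let V be a finite-dimensional module over the Lie algebra Vir⁺ (basis L_n, n ≥ 1, [L_m,L_n] = (m−n)L_{m+n}), and let w ∈ V satisfy L_n w = c_n w for all n ≥ 1 with c_n ∈ ℂ. Suppose u_0, u_1, u_2, ... ∈ V satisfy L_n u_i = c_n u_i + (n/2 − i − 1/2) u_{n+i} for all n ≥ 1, i ≥ 0. If a nontrivial finite linear relation a_{i_1}u_{i_1} + ... + a_{i_p}u_{i_p} = 0 holds with all a_{i_j} ≠ 0 and i_1 < ... < i_p, then p = 1, i.e., some u_m = 0. -/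
/-- Let `V` be a finite-dimensional module over `Vir⁺` (operators `ρ n` for
`n ≥ 1` with `[L_m, L_n] = (m−n)L_{m+n}`), and let `w ∈ V` satisfy `L_n w = c_n w` for all
`n ≥ 1`.  Suppose `u_0, u_1, u_2, … ∈ V` satisfy
`L_n u_i = c_n u_i + (n/2 − i − 1/2) u_{n+i}` for all `n ≥ 1`, `i ≥ 0`.  If a nontrivial
finite linear relation `a_{i_1}u_{i_1} + ⋯ + a_{i_p}u_{i_p} = 0` with all coefficients
nonzero holds, then the minimal length of such a relation is `p = 1`, i.e. some `u_m = 0`. -/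
theorem whittaker_stmt10 (V : Type*) [AddCommGroup V] [Module ℂ V] [FiniteDimensional ℂ V]
    (ρ : ℤ → Module.End ℂ V) (c : ℤ → ℂ)
    (hrel : ∀ m n : ℤ, 1 ≤ m → 1 ≤ n →
      ρ m * ρ n - ρ n * ρ m = (((m : ℂ) - (n : ℂ))) • ρ (m + n))
    (w : V) (hw : ∀ n : ℤ, 1 ≤ n → ρ n w = c n • w)
    (u : ℕ → V)
    (hu : ∀ n : ℕ, 1 ≤ n → ∀ i : ℕ,
      ρ (n : ℤ) (u i) = c (n : ℤ) • u i + ((n : ℂ)/2 - (i : ℂ) - 1/2) • u (n + i))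
    (s : Finset ℕ) (hne : s.Nonempty) (a : ℕ → ℂ)
    (ha : ∀ i ∈ s, a i ≠ 0)
    (hzero : ∑ i ∈ s, a i • u i = 0)
    (hmin : ∀ t : Finset ℕ, t.Nonempty → ∀ b : ℕ → ℂ,
      (∀ i ∈ t, b i ≠ 0) → ∑ i ∈ t, b i • u i = 0 → s.card ≤ t.card) :
    s.card = 1 := by
  by_contra hcard
  have h1 : 1 ≤ s.card := Finset.one_le_card.mpr hne
  have h2 : 2 ≤ s.card := by omega
  set m := s.min' hne with hm
  have hms : m ∈ s := s.min'_mem hne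
  set n : ℕ := 2 * m + 1 with hn
  have hn1 : 1 ≤ n := by omega
  have key : ∑ i ∈ s, (a i * ((m : ℂ) - (i : ℂ))) • u (n + i) = 0 := by
    have h0 : (ρ (n : ℤ)) (∑ i ∈ s, a i • u i) - c (n : ℤ) • (∑ i ∈ s, a i • u i) = 0 := by
      rw [hzero]; simp
    rw [map_sum, Finset.smul_sum, ← Finset.sum_sub_distrib] at h0
    calc ∑ i ∈ s, (a i * ((m : ℂ) - (i : ℂ))) • u (n + i)
        = ∑ i ∈ s, ((ρ (n : ℤ)) (a i • u i) - c (n : ℤ) • (a i • u i)) := by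
          apply Finset.sum_congr rfl
          intro i _
          rw [map_smul, hu n hn1 i]
          have hk : ((n : ℂ)/2 - (i : ℂ) - 1/2) = (m : ℂ) - (i : ℂ) := by
            rw [hn]; push_cast; ring
          rw [hk]
          module
      _ = 0 := h0
  have key2 : ∑ i ∈ s.erase m, (a i * ((m : ℂ) - (i : ℂ))) • u (n + i) = 0 := by
    have h3 := key
    rw [← Finset.add_sum_erase s (fun i => (a i * ((m : ℂ) - (i : ℂ))) • u (n + i)) hms] at h3
    simpa using h3
  set t : Finset ℕ := (s.erase m).image (fun i => n + i) with ht
  set b : ℕ → ℂ := fun j => a (j - n) * ((m : ℂ) - ((j - n : ℕ) : ℂ)) with hb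
  have hinj : ∀ x ∈ s.erase m, ∀ y ∈ s.erase m, n + x = n + y → x = y := by
    intro x _ y _ h; omega
  have htcard : t.card = s.card - 1 := by
    rw [ht, Finset.card_image_of_injOn hinj, Finset.card_erase_of_mem hms]
  have htne : t.Nonempty := by
    rw [← Finset.card_pos, htcard]; omega
  have hbne : ∀ j ∈ t, b j ≠ 0 := by
    intro j hj
    rw [ht, Finset.mem_image] at hj
    obtain ⟨i, hi, rfl⟩ := hj
    have hi1 : i ∈ s := Finset.mem_of_mem_erase hi
    have hi2 : i ≠ m := Finset.ne_of_mem_erase hi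
    have hsub : n + i - n = i := by omega
    rw [hb]
    simp only [hsub]
    exact mul_ne_zero (ha i hi1) (sub_ne_zero.mpr (by exact_mod_cast fun h => hi2 (Nat.cast_injective h).symm))
  have hbzero : ∑ j ∈ t, b j • u j = 0 := by
    rw [ht, Finset.sum_image hinj]
    rw [← key2]
    apply Finset.sum_congr rfl
    intro i _
    have hsub : n + i - n = i := by omega
    rw [hb]; simp only [hsub]
  have := hmin t htne b hbne hbzero
  omega
end
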